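/- Reducing a critical clique of size greater than k+1 to size exactly k+1 preserves the answer to CEVS: if K is a critical clique of G with |K| > k+1 and G' is obtained by deleting |K| − (k+1) vertices of K, then (G,k) is a yes-instance of Cluster Editing with Vertex Splitting iff (G',k) is. -/

import Mathlib

open scoped Classical

/-- The cluster graph determined by a covering `C` of the vertex set: two distinct
vertices are adjacent iff they lie in a common set of `C`. -/
def clusterGraphOf {V : Type*} (C : Finset (Finset V)) : SimpleGraph V :=
  SimpleGraph.fromRel (fun u v => ∃ S ∈ C, u ∈ S ∧ v ∈ S)

/-- The number of vertex splittings needed to realize the covering `C`: a vertex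
occurring in `m` clusters must be split `m - 1` times. -/
noncomputable def splitCost {V : Type*} [Fintype V] (C : Finset (Finset V)) : ℕ :=
  ∑ v : V, ((C.filter (fun S => v ∈ S)).card - 1)

/-- The number of edges on which two graphs differ. -/
noncomputable def editDiff {V : Type*} [Fintype V] (G H : SimpleGraph V) : ℕ :=
  (Finset.univ.filter (fun e : Sym2 V =>
    (e ∈ G.edgeSet ∧ e ∉ H.edgeSet) ∨ (e ∉ G.edgeSet ∧ e ∈ H.edgeSet))).card

/-- The minimum number of edit operations (edge additions, edge deletions and
inclusive vertex splits) of a solution of CEVS represented by the covering `C`. -/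
noncomputable def cevsCost {V : Type*} [Fintype V] (G : SimpleGraph V)
    (C : Finset (Finset V)) : ℕ :=
  splitCost C + editDiff G (clusterGraphOf C)

/-- `C` is a covering of the vertex set. -/
def IsCovering {V : Type*} (C : Finset (Finset V)) : Prop :=
  ∀ v : V, ∃ S ∈ C, v ∈ S

/-- `(G, k)` is a yes-instance of Cluster Editing with Vertex Splitting: some
covering of the vertex set (representing the clusters of the final cluster graph,
each set being the original vertices corresponding to one final clique) has edit
cost at most `k`. -/
noncomputable def CEVS {V : Type*} [Fintype V] (G : SimpleGraph V) (k : ℕ) : Prop :=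
  ∃ C : Finset (Finset V), IsCovering C ∧ cevsCost G C ≤ k

/-- `C` is an optimal solution of CEVS on `G`: a covering of minimum edit cost. -/
noncomputable def IsOptimalSolution {V : Type*} [Fintype V] (G : SimpleGraph V)
    (C : Finset (Finset V)) : Prop :=
  IsCovering C ∧ ∀ C' : Finset (Finset V), IsCovering C' → cevsCost G C ≤ cevsCost G C'

/-- The closed neighborhood `N[v]` of a vertex. -/
def closedNbhd {V : Type*} (G : SimpleGraph V) (v : V) : Set V :=
  insert v (G.neighborSet v)

/-- A critical clique: a maximal set of vertices inducing a complete subgraph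
all of whose members share the same closed neighborhood. -/
def IsCriticalClique {V : Type*} (G : SimpleGraph V) (C : Set V) : Prop :=
  G.IsClique C ∧ (∃ U : Set V, ∀ v ∈ C, closedNbhd G v = U) ∧
    ∀ D : Set V, C ⊆ D → G.IsClique D →
      (∃ U : Set V, ∀ v ∈ D, closedNbhd G v = U) → D = C

/- ------------------ helpers ------------------ -/

private lemma cluster_adj {V : Type*} (C : Finset (Finset V)) (x y : V) :
    (clusterGraphOf C).Adj x y ↔ x ≠ y ∧ ∃ S ∈ C, x ∈ S ∧ y ∈ S := by
  unfold clusterGraphOf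
  rw [SimpleGraph.fromRel_adj]
  refine and_congr_right fun _ => ⟨?_, Or.inl⟩
  rintro (⟨S, hS, h1, h2⟩ | ⟨S, hS, h1, h2⟩) <;> exact ⟨S, hS, by tauto⟩

private lemma bad_pair {V : Type*} (G H : SimpleGraph V) (x y : V) :
    ((s(x,y) ∈ G.edgeSet ∧ s(x,y) ∉ H.edgeSet) ∨ (s(x,y) ∉ G.edgeSet ∧ s(x,y) ∈ H.edgeSet))
    ↔ ((G.Adj x y ∧ ¬ H.Adj x y) ∨ (¬ G.Adj x y ∧ H.Adj x y)) := by
  simp [SimpleGraph.mem_edgeSet]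


private lemma filter_card_congr {α : Type*} (s : Finset α) (p q : α → Prop)
    [DecidablePred p] [DecidablePred q] (h : ∀ x, p x ↔ q x) :
    (s.filter p).card = (s.filter q).card :=
  congrArg Finset.card (Finset.filter_congr fun x _ => h x)

private lemma splitCost_eq {V : Type*} [Fintype V] (C : Finset (Finset V)) (m : V → ℕ)
    (hm : ∀ v, m v = (C.filter (fun S => v ∈ S)).card) :
    splitCost C = ∑ v : V, (m v - 1) := by
  unfold splitCost
  refine Finset.sum_congr rfl fun v _ => ?_
  rw [hm v]

private lemma editDiff_eq {V : Type*} [Fintype V] (G H : SimpleGraph V)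
    (p : Sym2 V → Prop) [DecidablePred p]
    (hp : ∀ e, p e ↔ ((e ∈ G.edgeSet ∧ e ∉ H.edgeSet) ∨ (e ∉ G.edgeSet ∧ e ∈ H.edgeSet))) :
    editDiff G H = (Finset.univ.filter p).card := by
  unfold editDiff
  have h1 : (Finset.univ.filter p) = Finset.univ.filter (fun e =>
      (e ∈ G.edgeSet ∧ e ∉ H.edgeSet) ∨ (e ∉ G.edgeSet ∧ e ∈ H.edgeSet)) :=
    Finset.filter_congr fun e _ => hp e
  rw [h1]

private lemma sum_le_sum_inj {V W : Type*} [Fintype V] [Fintype W] (f : V → ℕ) (g : W → ℕ)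
    (φ : V → W) (hφ : Function.Injective φ) (h : ∀ v, f v ≤ g (φ v)) :
    ∑ v : V, f v ≤ ∑ w : W, g w := by
  calc ∑ v : V, f v ≤ ∑ v : V, g (φ v) := Finset.sum_le_sum fun v _ => h v
    _ = ∑ w ∈ Finset.univ.image φ, g w :=
        (Finset.sum_image (fun x _ y _ hxy => hφ hxy)).symm
    _ ≤ ∑ w : W, g w := Finset.sum_le_sum_of_subset (Finset.subset_univ _)

private lemma sum_le_sum_zero_inj {V W : Type*} [Fintype V] [Fintype W] (f : V → ℕ) (g : W → ℕ)
    (A : Finset V) (φ : V → W) (hφ : ∀ v ∉ A, ∀ w ∉ A, φ v = φ w → v = w)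
    (h0 : ∀ v ∈ A, f v = 0) (h : ∀ v ∉ A, f v ≤ g (φ v)) :
    ∑ v : V, f v ≤ ∑ w : W, g w := by
  have h1 : ∑ v : V, f v = ∑ v ∈ Finset.univ \ A, f v := by
    refine (Finset.sum_subset (Finset.subset_univ _) ?_).symm
    intro v _ hv
    exact h0 v (by by_contra hvA; exact hv (Finset.mem_sdiff.2 ⟨Finset.mem_univ _, hvA⟩))
  rw [h1]
  calc ∑ v ∈ Finset.univ \ A, f v ≤ ∑ v ∈ Finset.univ \ A, g (φ v) :=
        Finset.sum_le_sum (fun v hv => h v (Finset.mem_sdiff.1 hv).2)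
    _ = ∑ w ∈ (Finset.univ \ A).image φ, g w :=
        (Finset.sum_image (fun x hx y hy =>
          hφ x (Finset.mem_sdiff.1 hx).2 y (Finset.mem_sdiff.1 hy).2)).symm
    _ ≤ ∑ w : W, g w := Finset.sum_le_sum_of_subset (Finset.subset_univ _)

private lemma card_filter_le_inj {α β : Type*} [Fintype α] [Fintype β]
    (p : α → Prop) (q : β → Prop) [DecidablePred p] [DecidablePred q] (φ : α → β)
    (hmem : ∀ a, p a → q (φ a)) (hinj : ∀ a, p a → ∀ a', p a' → φ a = φ a' → a = a') :
    (Finset.univ.filter p).card ≤ (Finset.univ.filter q).card := by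
  refine Finset.card_le_card_of_injOn φ ?_ ?_
  · intro a ha
    rw [Finset.mem_coe, Finset.mem_filter] at ha ⊢
    exact ⟨Finset.mem_univ _, hmem a ha.2⟩
  · intro a ha a' ha' hp
    rw [Finset.mem_coe, Finset.mem_filter] at ha ha'
    exact hinj a ha.2 a' ha'.2 hp

/- ------------------ forward direction ------------------ -/

private lemma cevs_restrict {V : Type*} [Fintype V] (G : SimpleGraph V) (k : ℕ)
    (s : Set V) [Fintype ↥s] (h : CEVS G k) : CEVS (G.induce s) k := by
  obtain ⟨C, hcov, hcost⟩ := h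
  have hmem : ∀ (v : ↥s) (T : Finset V), v ∈ T.subtype (· ∈ s) ↔ (v : V) ∈ T := by
    intro v T; simp [Finset.mem_subtype]
  set r : Finset V → Finset ↥s := fun T => T.subtype (· ∈ s) with hr
  refine ⟨C.image r, ?_, ?_⟩
  · intro v
    obtain ⟨S, hS, hv⟩ := hcov ↑v
    exact ⟨r S, Finset.mem_image_of_mem _ hS, (hmem v S).2 hv⟩
  · refine le_trans ?_ hcost
    unfold cevsCost
    rw [splitCost_eq (C.image r) (fun v => ((C.image r).filter (fun S => v ∈ S)).card)
          (fun v => by congr!),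
        splitCost_eq C (fun v => (C.filter (fun S => v ∈ S)).card) (fun v => by congr!),
        editDiff_eq (G.induce s) (clusterGraphOf (C.image r)) _ (fun _ => Iff.rfl),
        editDiff_eq G (clusterGraphOf C) _ (fun _ => Iff.rfl)]
    have hclust : ∀ (x y : ↥s),
        ((clusterGraphOf (C.image r)).Adj x y ↔ (clusterGraphOf C).Adj x.1 y.1) := by
      intro x y
      rw [cluster_adj, cluster_adj]
      constructor
      · rintro ⟨hne, S', hS', h1, h2⟩
        obtain ⟨T, hT, rfl⟩ := Finset.mem_image.1 hS'
        exact ⟨fun h => hne (Subtype.val_injective h), T, hT,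
          (hmem x T).1 h1, (hmem y T).1 h2⟩
      · rintro ⟨hne, T, hT, h1, h2⟩
        exact ⟨fun h => hne (congrArg _ h), r T, Finset.mem_image_of_mem _ hT,
          (hmem x T).2 h1, (hmem y T).2 h2⟩
    refine Nat.add_le_add ?_ ?_
    · refine sum_le_sum_inj _ _ (Subtype.val : ↥s → V) Subtype.val_injective ?_
      intro v
      refine Nat.sub_le_sub_right ?_ 1
      rw [Finset.filter_image]
      refine le_trans Finset.card_image_le (le_of_eq ?_)
      exact congrArg Finset.card (Finset.filter_congr fun T _ => hmem v T)
    · refine card_filter_le_inj _ _ (Sym2.map (Subtype.val : ↥s → V)) ?_ ?_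
      · intro e
        induction e using Sym2.ind with
        | _ x y =>
          intro hp
          rw [Sym2.map_pair_eq]
          rw [bad_pair] at hp ⊢
          have hadj : (G.induce s).Adj x y ↔ G.Adj x.1 y.1 := by simp
          rw [hadj, hclust] at hp
          exact hp
      · intro e _ e' _ hee
        exact (Function.Embedding.sym2Map
          ⟨Subtype.val, Subtype.val_injective⟩).injective hee

/- ------------------ backward direction ------------------ -/

private lemma cevs_extend {V : Type*} [Fintype V] (G : SimpleGraph V) (k : ℕ)
    (K : Finset V)
    (hnbhd : ∀ x ∈ K, ∀ y ∈ K, closedNbhd G x = closedNbhd G y)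
    (D : Finset V) (hD : D ⊆ K) (hKD : (K \ D).card = k + 1)
    (s : Set V) [Fintype ↥s] (hsmem : ∀ v : V, v ∈ s ↔ v ∉ D)
    (h : CEVS (G.induce s) k) : CEVS G k := by
  obtain ⟨C', hcov', hcost'⟩ := h
  -- neighborhood facts
  have hadjK : ∀ x ∈ K, ∀ y ∈ K, x ≠ y → G.Adj x y := by
    intro x hx y hy hxy
    have h1 := hnbhd y hy x hx
    have hy' : y ∈ closedNbhd G x := by
      rw [← h1]; exact Set.mem_insert _ _
    rcases Set.mem_insert_iff.1 hy' with h' | h'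
    · exact absurd h'.symm hxy
    · exact ((G.adj_comm x y).1 h').symm
  have hadjIff : ∀ x ∈ K, ∀ y ∈ K, ∀ w, w ≠ x → w ≠ y → (G.Adj x w ↔ G.Adj y w) := by
    intro x hx y hy w hwx hwy
    have h1 := hnbhd x hx y hy
    constructor
    · intro hadj
      have hw : w ∈ closedNbhd G x := Set.mem_insert_of_mem _ hadj
      rw [h1] at hw
      rcases Set.mem_insert_iff.1 hw with h' | h'
      · exact absurd h' hwy
      · exact h'
    · intro hadj
      have hw : w ∈ closedNbhd G y := Set.mem_insert_of_mem _ hadj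
      rw [← h1] at hw
      rcases Set.mem_insert_iff.1 hw with h' | h'
      · exact absurd h' hwx
      · exact h'
  -- K' inside the subtype
  have hKs : ∀ x ∈ K \ D, x ∈ s := by
    intro x hx; exact (hsmem x).2 (Finset.mem_sdiff.1 hx).2
  set K' : Finset ↥s := (K \ D).subtype (· ∈ s) with hK'
  have hK'mem : ∀ v : ↥s, v ∈ K' ↔ (v : V) ∈ K := by
    intro v
    rw [hK', Finset.mem_subtype, Finset.mem_sdiff]
    exact ⟨fun h => h.1, fun h => ⟨h, (hsmem _).1 v.2⟩⟩
  have hK'card : K'.card = k + 1 := by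
    rw [hK', Finset.card_subtype, Finset.filter_true_of_mem hKs, hKD]
  -- the cost in explicit form
  set m : ↥s → ℕ := fun v => (C'.filter (fun S => v ∈ S)).card with hm
  set p' : Sym2 ↥s → Prop := fun e =>
    (e ∈ (G.induce s).edgeSet ∧ e ∉ (clusterGraphOf C').edgeSet) ∨
      (e ∉ (G.induce s).edgeSet ∧ e ∈ (clusterGraphOf C').edgeSet) with hp'
  set E : Finset (Sym2 ↥s) := Finset.univ.filter p' with hE
  have hcost2 : (∑ v : ↥s, (m v - 1)) + E.card ≤ k := by
    have hrw : cevsCost (G.induce s) C' = (∑ v : ↥s, (m v - 1)) + E.card := by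
      unfold cevsCost
      rw [splitCost_eq C' m (fun v => by simp only [hm]; congr!),
          editDiff_eq (G.induce s) (clusterGraphOf C') p' (fun e => by simp only [hp']), hE]
    rw [← hrw]
    exact hcost'
  -- counting: find an untouched vertex u in K'
  have hdisj : ∀ v ∈ K', ∀ w ∈ K', v ≠ w →
      Disjoint (E.filter (fun e => ∃ z ∉ K', e = s(v, z)))
               (E.filter (fun e => ∃ z ∉ K', e = s(w, z))) := by
    intro v hv w hw hvw
    rw [Finset.disjoint_left]
    rintro e he1 he2
    obtain ⟨-, z, hz, rfl⟩ := Finset.mem_filter.1 he1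
    obtain ⟨-, z', hz', heq⟩ := Finset.mem_filter.1 he2
    rcases Sym2.eq_iff.1 heq with ⟨h1, h2⟩ | ⟨h1, h2⟩
    · exact hvw h1
    · exact hz' (h1 ▸ hv)
  have hsum_d : ∑ v ∈ K', ((m v - 1) + (E.filter (fun e => ∃ z ∉ K', e = s(v, z))).card) ≤ k := by
    rw [Finset.sum_add_distrib]
    have h1 : ∑ v ∈ K', (m v - 1) ≤ ∑ v : ↥s, (m v - 1) :=
      Finset.sum_le_sum_of_subset (Finset.subset_univ _)
    have h2 : ∑ v ∈ K', (E.filter (fun e => ∃ z ∉ K', e = s(v, z))).card ≤ E.card := by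
      rw [← Finset.card_biUnion hdisj]
      exact Finset.card_le_card (Finset.biUnion_subset.2 fun v _ => Finset.filter_subset _ _)
    exact le_trans (Nat.add_le_add h1 h2) hcost2
  have hex : ∃ u ∈ K', (m u - 1) + (E.filter (fun e => ∃ z ∉ K', e = s(u, z))).card = 0 := by
    by_contra hc
    push_neg at hc
    have hone : ∀ v ∈ K', 1 ≤ (m v - 1) + (E.filter (fun e => ∃ z ∉ K', e = s(v, z))).card :=
      fun v hv => Nat.one_le_iff_ne_zero.2 (hc v hv)
    have := calc (k + 1 : ℕ) = ∑ _v ∈ K', 1 := by rw [Finset.sum_const, hK'card, smul_eq_mul, mul_one]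
      _ ≤ ∑ v ∈ K', ((m v - 1) + (E.filter (fun e => ∃ z ∉ K', e = s(v, z))).card) :=
          Finset.sum_le_sum hone
    omega
  obtain ⟨u, huK', hdu⟩ := hex
  have hmu : m u = 1 := by
    have h1 : 1 ≤ m u := by
      obtain ⟨S, hS, hS'⟩ := hcov' u
      have : S ∈ C'.filter (fun S => u ∈ S) := Finset.mem_filter.2 ⟨hS, hS'⟩
      have := Finset.card_pos.2 ⟨S, this⟩
      simpa [hm] using this
    omega
  have hno : ∀ w : ↥s, w ∉ K' → ¬ p' s(u, w) := by
    intro w hw hpw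
    have hmem : s(u, w) ∈ E.filter (fun e => ∃ z ∉ K', e = s(u, z)) :=
      Finset.mem_filter.2 ⟨Finset.mem_filter.2 ⟨Finset.mem_univ _, hpw⟩, ⟨w, hw, rfl⟩⟩
    have hzero : (E.filter (fun e => ∃ z ∉ K', e = s(u, z))).card = 0 := by omega
    rw [Finset.card_eq_zero.1 hzero] at hmem
    exact absurd hmem (Finset.notMem_empty _)
  have hu_adj : ∀ w : ↥s, w ∉ K' →
      ((G.induce s).Adj u w ↔ (clusterGraphOf C').Adj u w) := by
    intro w hw
    have h1 := hno w hw
    simp only [hp'] at h1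
    rw [bad_pair] at h1
    tauto
  have hu0K : (u : V) ∈ K := (hK'mem u).1 huK'
  -- the extension map
  set f : Finset ↥s → Finset V :=
    fun T => ((T \ K').image Subtype.val) ∪ (if u ∈ T then K else ∅) with hf
  have hf1 : ∀ T, ∀ x ∈ K, (x ∈ f T ↔ u ∈ T) := by
    intro T x hx
    simp only [hf, Finset.mem_union, Finset.mem_image]
    constructor
    · rintro (⟨y, hy, rfl⟩ | hx')
      · exact absurd ((hK'mem y).2 hx) (Finset.mem_sdiff.1 hy).2
      · by_cases hu : u ∈ T
        · exact hu
        · simp [hu] at hx'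
    · intro hu
      right
      simp [hu, hx]
  have hf2 : ∀ T, ∀ x : ↥s, (x : V) ∉ K → ((x : V) ∈ f T ↔ x ∈ T) := by
    intro T x hx
    simp only [hf, Finset.mem_union, Finset.mem_image]
    constructor
    · rintro (⟨y, hy, hyx⟩ | hx')
      · have : y = x := Subtype.ext hyx
        exact this ▸ (Finset.mem_sdiff.1 hy).1
      · by_cases hu : u ∈ T
        · simp only [if_pos hu] at hx'
          exact absurd hx' hx
        · simp [hu] at hx'
    · intro hxT
      exact Or.inl ⟨x, Finset.mem_sdiff.2 ⟨hxT, fun hx' => hx ((hK'mem x).1 hx')⟩, rfl⟩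
  obtain ⟨T₀, hT₀, huT₀⟩ := hcov' u
  -- claims about edited pairs
  have claimA : ∀ x ∈ K, ∀ y, x ≠ y →
      (G.Adj x y ↔ (clusterGraphOf (C'.image f)).Adj x y) := by
    intro x hx y hxy
    rw [cluster_adj]
    by_cases hy : y ∈ K
    · exact iff_of_true (hadjK x hx y hy hxy)
        ⟨hxy, f T₀, Finset.mem_image_of_mem _ hT₀,
          (hf1 T₀ x hx).2 huT₀, (hf1 T₀ y hy).2 huT₀⟩
    · have hys : y ∈ s := (hsmem y).2 (fun hyD => hy (hD hyD))
      have hyK' : (⟨y, hys⟩ : ↥s) ∉ K' := fun h' => hy ((hK'mem _).1 h')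
      have hyu : y ≠ (u : V) := fun h' => hy (h' ▸ hu0K)
      have step1 : G.Adj x y ↔ G.Adj (u : V) y :=
        hadjIff x hx (u : V) hu0K y (Ne.symm hxy) hyu
      have step2 : G.Adj (u : V) y ↔ (G.induce s).Adj u ⟨y, hys⟩ := by simp
      have step3 := hu_adj ⟨y, hys⟩ hyK'
      rw [cluster_adj] at step3
      rw [step1, step2, step3]
      constructor
      · rintro ⟨-, S, hS, h1, h2⟩
        exact ⟨hxy, f S, Finset.mem_image_of_mem _ hS,
          (hf1 S x hx).2 h1, (hf2 S ⟨y, hys⟩ hy).2 h2⟩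
      · rintro ⟨-, S', hS', h1, h2⟩
        obtain ⟨T, hT, rfl⟩ := Finset.mem_image.1 hS'
        refine ⟨fun h' => hyu (congrArg Subtype.val h').symm, T, hT,
          (hf1 T x hx).1 h1, (hf2 T ⟨y, hys⟩ hy).1 h2⟩
  -- the predicate for edited pairs of the extended solution
  set pV : Sym2 V → Prop := fun e =>
    (e ∈ G.edgeSet ∧ e ∉ (clusterGraphOf (C'.image f)).edgeSet) ∨
      (e ∉ G.edgeSet ∧ e ∈ (clusterGraphOf (C'.image f)).edgeSet) with hpV
  have hgood : ∀ x y : V, pV s(x, y) → x ∉ K ∧ y ∉ K := by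
    have key : ∀ x y : V, pV s(x, y) → x ∉ K := by
      intro x y hp hx
      simp only [hpV] at hp
      rw [bad_pair] at hp
      by_cases hxy : x = y
      · subst hxy
        simp at hp
      · have := claimA x hx y hxy
        tauto
    intro x y hp
    refine ⟨key x y hp, key y x ?_⟩
    rwa [Sym2.eq_swap] at hp
  have claimB : ∀ x y : ↥s, (x : V) ∉ K → (y : V) ∉ K →
      (pV s((x : V), (y : V)) ↔ p' s(x, y)) := by
    intro x y hx hy
    simp only [hpV, hp']
    rw [bad_pair, bad_pair]
    have hadj : (G.induce s).Adj x y ↔ G.Adj (x : V) (y : V) := by simp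
    have hclust : (clusterGraphOf (C'.image f)).Adj (x : V) (y : V) ↔
        (clusterGraphOf C').Adj x y := by
      rw [cluster_adj, cluster_adj]
      constructor
      · rintro ⟨hne, S', hS', h1, h2⟩
        obtain ⟨T, hT, rfl⟩ := Finset.mem_image.1 hS'
        exact ⟨fun h' => hne (congrArg _ h'), T, hT,
          (hf2 T x hx).1 h1, (hf2 T y hy).1 h2⟩
      · rintro ⟨hne, T, hT, h1, h2⟩
        exact ⟨fun h' => hne (Subtype.ext h'), f T, Finset.mem_image_of_mem _ hT,
          (hf2 T x hx).2 h1, (hf2 T y hy).2 h2⟩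
    rw [hadj, hclust]
  -- the lift map
  set lift : V → ↥s := fun v => if hv : v ∈ s then (⟨v, hv⟩ : ↥s) else u with hlift
  have hliftv : ∀ (v : V) (hv : v ∈ s), lift v = ⟨v, hv⟩ := by
    intro v hv; simp only [hlift, dif_pos hv]
  have hliftval : ∀ (v : V), v ∉ K → (lift v : V) = v := by
    intro v hv
    have hvs : v ∈ s := (hsmem v).2 (fun hvD => hv (hD hvD))
    rw [hliftv v hvs]
  -- now build the solution
  refine ⟨C'.image f, ?_, ?_⟩
  · intro v
    by_cases hv : v ∈ K
    · exact ⟨f T₀, Finset.mem_image_of_mem _ hT₀, (hf1 T₀ v hv).2 huT₀⟩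
    · have hvs : v ∈ s := (hsmem v).2 (fun hvD => hv (hD hvD))
      obtain ⟨T, hT, hvT⟩ := hcov' ⟨v, hvs⟩
      exact ⟨f T, Finset.mem_image_of_mem _ hT, (hf2 T ⟨v, hvs⟩ hv).2 hvT⟩
  · have hrw : cevsCost G (C'.image f) =
        (∑ v : V, (((C'.image f).filter (fun S => v ∈ S)).card - 1)) +
          (Finset.univ.filter pV).card := by
      unfold cevsCost
      rw [splitCost_eq (C'.image f)
            (fun v => (((C'.image f)).filter (fun S => v ∈ S)).card) (fun v => by congr!),
          editDiff_eq G (clusterGraphOf (C'.image f)) pV (fun e => by simp only [hpV])]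
    rw [hrw]
    refine le_trans (Nat.add_le_add ?_ ?_) hcost2
    · -- split cost
      refine sum_le_sum_zero_inj _ _ K lift ?_ ?_ ?_
      · intro v hv w hw heq
        rw [← hliftval v hv, ← hliftval w hw, heq]
      · intro v hv
        have hle : ((C'.image f).filter (fun S => v ∈ S)).card ≤ 1 := by
          rw [Finset.filter_image]
          refine le_trans Finset.card_image_le ?_
          have : (C'.filter (fun T => v ∈ f T)).card = m u := by
            simp only [hm]
            exact filter_card_congr _ _ _ fun T => hf1 T v hv
          rw [this, hmu]
        omega
      · intro v hv
        refine Nat.sub_le_sub_right ?_ 1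
        have hvs : v ∈ s := (hsmem v).2 (fun hvD => hv (hD hvD))
        rw [Finset.filter_image]
        refine le_trans Finset.card_image_le (le_of_eq ?_)
        rw [hliftv v hvs]
        simp only [hm]
        exact filter_card_congr _ _ _ fun T => hf2 T ⟨v, hvs⟩ hv
    · -- edit cost
      rw [hE]
      refine card_filter_le_inj pV p' (Sym2.map lift) ?_ ?_
      · intro e
        induction e using Sym2.ind with
        | _ x y =>
          intro hp
          obtain ⟨hx, hy⟩ := hgood x y hp
          have hxs : x ∈ s := (hsmem x).2 (fun h' => hx (hD h'))
          have hys : y ∈ s := (hsmem y).2 (fun h' => hy (hD h'))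
          rw [Sym2.map_pair_eq, hliftv x hxs, hliftv y hys]
          exact (claimB ⟨x, hxs⟩ ⟨y, hys⟩ hx hy).1 hp
      · have hval : ∀ e : Sym2 V, pV e → Sym2.map Subtype.val (Sym2.map lift e) = e := by
          intro e
          induction e using Sym2.ind with
          | _ x y =>
            intro hp
            obtain ⟨hx, hy⟩ := hgood x y hp
            rw [Sym2.map_pair_eq, Sym2.map_pair_eq, hliftval x hx, hliftval y hy]
        intro e he e' he' heq
        rw [← hval e he, ← hval e' he', heq]

/-- Truncating a critical clique with more than `k + 1` vertices to exactly `k + 1`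
vertices preserves the answer to CEVS: if `K` is a critical clique of `G` with
`|K| > k + 1` and `G'` is obtained from `G` by deleting a set `D` of `|K| - (k + 1)`
vertices of `K`, then `(G, k)` is a yes-instance iff `(G', k)` is. -/
theorem truncate_critical_clique {V : Type*} [Fintype V] (G : SimpleGraph V) (k : ℕ)
    (K : Finset V) (hK : IsCriticalClique G (K : Set V)) (hbig : k + 1 < K.card)
    (D : Finset V) (hD : D ⊆ K) (hcard : D.card = K.card - (k + 1)) :
    CEVS G k ↔ CEVS (G.induce ((D : Set V)ᶜ)) k := by
  constructor
  · exact fun h => cevs_restrict G k _ h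
  · intro h
    refine cevs_extend G k K ?_ D hD ?_ ((D : Set V)ᶜ) (fun _ => Iff.rfl) h
    · obtain ⟨U, hU⟩ := hK.2.1
      intro x hx y hy
      rw [hU x (Finset.mem_coe.2 hx), hU y (Finset.mem_coe.2 hy)]
    · rw [Finset.card_sdiff_of_subset hD, hcard]
      omega
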